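/- Let H be a complex Hilbert space and A a continuous linear selfadjoint operator on H. Let D ⊆ ℂ be a set closed under complex conjugation such that A − z is invertible for every z ∈ D, and write R_z = (A − z)⁻¹. Suppose given families of vectors m_z, n_z ∈ H and nonzero scalars b_z ∈ ℂ, indexed by z ∈ D, satisfying for all z, ξ ∈ D: (i) m_z = m_ξ + (z − ξ)·R_z m_ξ, (ii) n_z = n_ξ + (z − ξ)·R_z n_ξ, and (iii) b_z⁻¹ − b_ξ⁻¹ = (ξ − z)·(m_ξ, n_{\bar z}). Define \tilde R_z := R_z + b_z(·, n_{\bar z})m_z, i.e. \tilde R_z f = R_z f + b_z (f, n_{\bar z}) m_z. Then the family \tilde R_z satisfies the Hilbert (first resolvent) identity: for all z, ξ ∈ D, \tilde R_z − \tilde R_ξ = (z − ξ)·\tilde R_z \tilde R_ξ. -/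

import Mathlib

open ContinuousLinearMap

local notation "⟪" x ", " y "⟫" => @inner ℂ _ _ x y

/-- Part a) of Proposition 4 of the paper: under the compatibility relations (11) and
(12) on the families `m_z`, `n_z`, `b_z`, the perturbed family
`R̃_z = R_z + b_z(·, n_z̄)m_z` satisfies the Hilbert (first resolvent) identity
`R̃_z - R̃_ξ = (z - ξ) R̃_z R̃_ξ`. -/
theorem perturbed_pseudoresolvent {H : Type*} [NormedAddCommGroup H] [InnerProductSpace ℂ H]
    [CompleteSpace H] (A : H →L[ℂ] H) (hA : IsSelfAdjoint A)
    (D : Set ℂ) (hD : ∀ z ∈ D, (starRingEnd ℂ) z ∈ D)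
    (R : ℂ → H →L[ℂ] H)
    (hR1 : ∀ z ∈ D, (A - z • 1) ∘L R z = 1) (hR2 : ∀ z ∈ D, R z ∘L (A - z • 1) = 1)
    (m n : ℂ → H) (b : ℂ → ℂ) (hb : ∀ z ∈ D, b z ≠ 0)
    (hm : ∀ z ∈ D, ∀ ξ ∈ D, m z = m ξ + (z - ξ) • R z (m ξ))
    (hn : ∀ z ∈ D, ∀ ξ ∈ D, n z = n ξ + (z - ξ) • R z (n ξ))
    (hbrel : ∀ z ∈ D, ∀ ξ ∈ D,
      (b z)⁻¹ - (b ξ)⁻¹ = (ξ - z) * ⟪n ((starRingEnd ℂ) z), m ξ⟫) :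
    ∀ z ∈ D, ∀ ξ ∈ D,
      (R z + b z • (innerSL ℂ (n ((starRingEnd ℂ) z))).smulRight (m z))
        - (R ξ + b ξ • (innerSL ℂ (n ((starRingEnd ℂ) ξ))).smulRight (m ξ))
      = (z - ξ) •
        ((R z + b z • (innerSL ℂ (n ((starRingEnd ℂ) z))).smulRight (m z)) ∘L
         (R ξ + b ξ • (innerSL ℂ (n ((starRingEnd ℂ) ξ))).smulRight (m ξ))) := by
  intro z hz ξ hξ
  have hzb : (starRingEnd ℂ) z ∈ D := hD z hz
  have hξb : (starRingEnd ℂ) ξ ∈ D := hD ξ hξ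
  -- star (R ξ) = R (conj ξ)
  have hAst : star (A - ξ • (1 : H →L[ℂ] H)) = A - (starRingEnd ℂ) ξ • 1 := by
    simp [star_sub, hA.star_eq, star_smul]
  have hstar : star (R ξ) = R ((starRingEnd ℂ) ξ) := by
    have hm1 : (A - ξ • (1 : H →L[ℂ] H)) * R ξ = 1 := hR1 ξ hξ
    have hm1' : (A - (starRingEnd ℂ) ξ • (1 : H →L[ℂ] H)) * R ((starRingEnd ℂ) ξ) = 1 :=
      hR1 _ hξb
    have h1 : star (R ξ) * (A - (starRingEnd ℂ) ξ • 1) = 1 := by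
      have := congrArg star hm1
      rwa [star_mul, hAst, star_one] at this
    calc star (R ξ) = star (R ξ) * ((A - (starRingEnd ℂ) ξ • 1) * R ((starRingEnd ℂ) ξ)) := by
          rw [hm1', mul_one]
      _ = (star (R ξ) * (A - (starRingEnd ℂ) ξ • 1)) * R ((starRingEnd ℂ) ξ) := by
          rw [mul_assoc]
      _ = R ((starRingEnd ℂ) ξ) := by rw [h1, one_mul]
  have hadj : ∀ x y : H, ⟪R ((starRingEnd ℂ) ξ) x, y⟫ = ⟪x, R ξ y⟫ := by
    intro x y
    rw [← hstar, star_eq_adjoint, adjoint_inner_left]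
  ext f
  -- applied resolvent facts
  have h1a : ∀ x : H, (A - ξ • (1 : H →L[ℂ] H)) (R ξ x) = x := fun x => by
    have := DFunLike.congr_fun (hR1 ξ hξ) x; simpa using this
  have h2a : ∀ x : H, R z ((A - z • (1 : H →L[ℂ] H)) x) = x := fun x => by
    have := DFunLike.congr_fun (hR2 z hz) x; simpa using this
  have hresf : R z f = R ξ f + (z - ξ) • R z (R ξ f) := by
    calc R z f = R z ((A - ξ • 1) (R ξ f)) := by rw [h1a]
      _ = R z ((A - z • (1 : H →L[ℂ] H)) (R ξ f) + (z - ξ) • (R ξ f)) := by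
          congr 1
          simp only [sub_apply, smul_apply, one_apply, sub_smul]
          simp only [show ∀ x : H, (1 : H →L[ℂ] H) x = x from fun _ => rfl]
          abel
      _ = R ξ f + (z - ξ) • R z (R ξ f) := by rw [map_add, map_smul, h2a]
  -- scalar relation for n
  have hnvec : n ((starRingEnd ℂ) z) - n ((starRingEnd ℂ) ξ)
      = ((starRingEnd ℂ) z - (starRingEnd ℂ) ξ) •
        R ((starRingEnd ℂ) ξ) (n ((starRingEnd ℂ) z)) := by
    have h := hn _ hξb _ hzb
    rw [h]
    module
  have hnrel : ⟪n ((starRingEnd ℂ) z), f⟫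
      = ⟪n ((starRingEnd ℂ) ξ), f⟫ + (z - ξ) * ⟪n ((starRingEnd ℂ) z), R ξ f⟫ := by
    have h := congrArg (fun v => ⟪v, f⟫) hnvec
    simp only [inner_sub_left, inner_smul_left, map_sub, starRingEnd_self_apply] at h
    rw [hadj] at h
    linear_combination h
  have hb4 : b z - b ξ = (z - ξ) * ⟪n ((starRingEnd ℂ) z), m ξ⟫ * (b z * b ξ) := by
    have hbz := hb z hz
    have hbξ := hb ξ hξ
    have h := hbrel z hz ξ hξ
    field_simp at h
    linear_combination -h
  -- main computation
  simp only [sub_apply, add_apply, smul_apply, comp_apply, smulRight_apply, innerSL_apply_apply,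
    coe_smul', Pi.smul_apply, map_add, map_smul, inner_add_right, inner_smul_right]
  rw [hm z hz ξ hξ, hresf, hnrel]
  match_scalars <;>
    first
      | ring1
      | linear_combination ⟪n ((starRingEnd ℂ) ξ), f⟫ * hb4
      | linear_combination (z - ξ) * ⟪n ((starRingEnd ℂ) ξ), f⟫ * hb4
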